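/- For t > 0, the integral ∫₀^a (x/a) e^{-xt}(1 - e^{-λx} + λx e^{-λx}) dx + ∫_a^∞ λ x e^{-(λ+t)x} dx equals (1/(at²))(1 - e^{-at} - a t e^{-at}) + ((λ - t)/(a(λ+t)³))(1 - e^{-a(λ+t)}) + (t/(λ+t)²) e^{-a(λ+t)}. -/

import Mathlib

open MeasureTheory Set

lemma hasDerivAt_poly_exp (c b0 b1 b2 x : ℝ) :
    HasDerivAt (fun y => (b0 + b1*y + b2*y^2) * Real.exp (c*y))
      ((b1 + 2*b2*x + c*(b0 + b1*x + b2*x^2)) * Real.exp (c*x)) x := by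
  have he : HasDerivAt (fun y => Real.exp (c*y)) (c * Real.exp (c*x)) x := by
    simpa [mul_comm, Function.comp_def] using (Real.hasDerivAt_exp (c*x)).comp x ((hasDerivAt_id x).const_mul c)
  have hp : HasDerivAt (fun y : ℝ => b0 + b1*y + b2*y^2) (b1 + 2*b2*x) x := by
    have h1 : HasDerivAt (fun y : ℝ => b1*y) b1 x := by
      simpa using (hasDerivAt_id x).const_mul b1
    have h2 : HasDerivAt (fun y : ℝ => b2*y^2) (b2*(2*x)) x := by
      have := (hasDerivAt_pow 2 x).const_mul b2
      simpa [mul_comm, mul_assoc] using this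
    have := ((hasDerivAt_const x b0).add h1).add h2
    exact this.congr_deriv (by ring)
  have := hp.mul he
  exact this.congr_deriv (by ring)

lemma tendsto_linear_mul_exp (b0 b1 s : ℝ) (hs : 0 < s) :
    Filter.Tendsto (fun x => (b0 + b1*x) * Real.exp (-s*x)) Filter.atTop (nhds 0) := by
  have hsx : Filter.Tendsto (fun x : ℝ => s*x) Filter.atTop Filter.atTop :=
    Filter.Tendsto.const_mul_atTop hs Filter.tendsto_id
  have h0 : Filter.Tendsto (fun x : ℝ => Real.exp (-(s*x))) Filter.atTop (nhds 0) :=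
    Real.tendsto_exp_neg_atTop_nhds_zero.comp hsx
  have h1 : Filter.Tendsto (fun x : ℝ => (s*x) * Real.exp (-(s*x))) Filter.atTop (nhds 0) := by
    have := (Real.tendsto_pow_mul_exp_neg_atTop_nhds_zero 1).comp hsx
    simpa [Function.comp_def] using this
  have hcomb := (h0.const_mul b0).add (h1.const_mul (b1/s))
  rw [mul_zero, mul_zero, add_zero] at hcomb
  refine hcomb.congr (fun x => ?_)
  have : -s*x = -(s*x) := by ring
  rw [this]
  field_simp

theorem mixture_integral_identity (a lam : ℝ) (ha : 0 < a) (hlam : 0 < lam) :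
    ∀ t : ℝ, 0 < t →
      (∫ x in (0 : ℝ)..a,
          (x / a) * Real.exp (-x * t) *
            (1 - Real.exp (-lam * x) + lam * x * Real.exp (-lam * x)))
        + (∫ x in Set.Ioi a, lam * x * Real.exp (-(lam + t) * x)) =
        (1 / (a * t ^ 2)) * (1 - Real.exp (-a * t) - a * t * Real.exp (-a * t))
          + ((lam - t) / (a * (lam + t) ^ 3)) * (1 - Real.exp (-a * (lam + t)))
          + (t / (lam + t) ^ 2) * Real.exp (-a * (lam + t)) := by
  intro t ht
  have hs : 0 < lam + t := by linarith
  have ha' : a ≠ 0 := ha.ne'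
  have ht' : t ≠ 0 := ht.ne'
  have hs' : lam + t ≠ 0 := hs.ne'
  -- coefficients
  set p0 : ℝ := -(1/(a*t^2)) with hp0
  set p1 : ℝ := -(1/(a*t)) with hp1
  set q0 : ℝ := 1/(a*(lam+t)^2) - 2*lam/(a*(lam+t)^3) with hq0
  set q1 : ℝ := 1/(a*(lam+t)) - 2*lam/(a*(lam+t)^2) with hq1
  set q2 : ℝ := -(lam/(a*(lam+t))) with hq2
  set G : ℝ → ℝ := fun x =>
    (p0 + p1*x + 0*x^2) * Real.exp (-t*x) + (q0 + q1*x + q2*x^2) * Real.exp (-(lam+t)*x)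
    with hG
  -- the interval integral
  have h1 : (∫ x in (0 : ℝ)..a,
      (x / a) * Real.exp (-x * t) *
        (1 - Real.exp (-lam * x) + lam * x * Real.exp (-lam * x))) = G a - G 0 := by
    apply intervalIntegral.integral_eq_sub_of_hasDerivAt
    · intro x _
      have hA := hasDerivAt_poly_exp (-t) p0 p1 0 x
      have hB := hasDerivAt_poly_exp (-(lam+t)) q0 q1 q2 x
      have hsum := hA.add hB
      convert hsum using 1
      · rfl
      have hexp : Real.exp (-(lam+t)*x) = Real.exp (-lam*x) * Real.exp (-t*x) := by
        rw [← Real.exp_add]; ring_nf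
      have hxt : -x*t = -t*x := by ring
      rw [hexp, hxt, hp0, hp1, hq0, hq1, hq2]
      field_simp
      ring
    · apply Continuous.intervalIntegrable
      fun_prop
  -- the improper integral
  have h2 : (∫ x in Set.Ioi a, lam * x * Real.exp (-(lam + t) * x)) =
      0 - ((-(lam/(lam+t)^2)) + (-(lam/(lam+t)))*a) * Real.exp (-(lam+t)*a) := by
    apply integral_Ioi_of_hasDerivAt_of_nonneg'
      (g := fun y => ((-(lam/(lam+t)^2)) + (-(lam/(lam+t)))*y) * Real.exp (-(lam+t)*y))
    · intro x _
      have := hasDerivAt_poly_exp (-(lam+t)) (-(lam/(lam+t)^2)) (-(lam/(lam+t))) 0 x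
      simp only [zero_mul, mul_zero, add_zero] at this
      convert this using 1
      field_simp
      ring
    · intro x hx
      have hx0 : 0 ≤ x := le_of_lt (lt_trans ha hx)
      positivity
    · exact tendsto_linear_mul_exp _ _ _ hs
  rw [h1, h2, hG]
  simp only [mul_zero, zero_mul, add_zero, Real.exp_zero, mul_one]
  have e1 : -t*a = -a*t := by ring
  have e2 : -(lam+t)*a = -a*(lam+t) := by ring
  rw [e1, e2, hp0, hp1, hq0, hq1, hq2]
  field_simp
  ring
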